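/- Let 0 ≤ b₁ < d₁ ≤ b₂ < d₂, φ(x) := exp(−x²/2), m̂₁ := ∫_{b₁}^{d₁} φ(x) dx and m̂₂ := ∫_{b₂}^{d₂} φ(x) dx. For λ ≥ max(b₁², 1), define H(λ) := ∫_0^{1 − b₁λ^{-1/2}} ∫_{b₁}^{min(d₁, √λ(1−α₁))} φ(z) ( ∫_0^{min(z + d₂, z + √λ α₁)} ( ∫_{max(b₂, y − z)}^{min(d₂, y − z + √λ(1−α₁))} φ(x) dx ) dy ) dz dα₁, where an inner integral over an interval [u, v] with v < u is taken to be 0. Then lim_{λ → ∞} H(λ) = m̂₁ ( φ(b₂) − φ(d₂) ) + m̂₂ ( φ(b₁) − φ(d₁) ). -/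

import Mathlib

open MeasureTheory Real Filter

/-- `φ(x) = exp(−x²/2)`. -/
noncomputable def phi (x : ℝ) : ℝ := Real.exp (-(x ^ 2 / 2))

/-- Integral of `f` over the interval `[u, v]`, taken to be `0` when `v < u`. -/
noncomputable def oint (u v : ℝ) (f : ℝ → ℝ) : ℝ := ∫ x in Set.Ioc u v, f x

/-- Primitive of `phi`. -/
noncomputable def Phi (t : ℝ) : ℝ := ∫ x in (0:ℝ)..t, phi x

lemma phi_cont : Continuous phi := by
  unfold phi; fun_prop

lemma phi_pos (x : ℝ) : 0 < phi x := Real.exp_pos _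

lemma phi_le_one (x : ℝ) : phi x ≤ 1 := by
  rw [phi, ← Real.exp_zero]
  apply Real.exp_le_exp.2
  nlinarith [sq_nonneg x]

lemma hasDerivAt_Phi (t : ℝ) : HasDerivAt Phi (phi t) t :=
  intervalIntegral.integral_hasDerivAt_right
    (phi_cont.intervalIntegrable _ _)
    (phi_cont.stronglyMeasurableAtFilter _ _) phi_cont.continuousAt

lemma Phi_cont : Continuous Phi := by
  have : ∀ t, HasDerivAt Phi (phi t) t := hasDerivAt_Phi
  exact (continuous_iff_continuousAt.2 fun t => (this t).continuousAt)

lemma Phi_mono : Monotone Phi := by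
  apply monotone_of_deriv_nonneg
  · exact fun t => (hasDerivAt_Phi t).differentiableAt
  · intro t
    rw [(hasDerivAt_Phi t).deriv]
    exact (phi_pos t).le

lemma integral_phi_eq (a b : ℝ) : ∫ x in a..b, phi x = Phi b - Phi a := by
  rw [Phi, Phi, intervalIntegral.integral_interval_sub_left
    (phi_cont.intervalIntegrable _ _) (phi_cont.intervalIntegrable _ _)]

lemma oint_eq {u v : ℝ} (h : u ≤ v) (f : ℝ → ℝ) : oint u v f = ∫ x in u..v, f x := by
  rw [oint, intervalIntegral.integral_of_le h]

lemma oint_phi (u v : ℝ) : oint u v phi = max (Phi v - Phi u) 0 := by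
  rcases le_or_gt u v with h | h
  · rw [oint_eq h, integral_phi_eq, max_eq_left (by linarith [Phi_mono h])]
  · rw [oint, Set.Ioc_eq_empty (by exact not_lt.2 h.le), setIntegral_empty,
      max_eq_right (by linarith [Phi_mono h.le])]

lemma hasDerivAt_neg_phi (t : ℝ) : HasDerivAt (fun s => -phi s) (t * phi t) t := by
  have h : HasDerivAt (fun s : ℝ => -(s ^ 2 / 2)) (-t) t := by
    have := ((hasDerivAt_pow 2 t).div_const 2).neg
    exact this.congr_deriv (by ring)
  have := (h.exp).neg
  simp only [phi]
  exact this.congr_deriv (by ring)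

lemma integral_id_mul_phi (a b : ℝ) : ∫ x in a..b, x * phi x = phi a - phi b := by
  have := intervalIntegral.integral_eq_sub_of_hasDerivAt
    (a := a) (b := b) (f := fun s => -phi s) (f' := fun s => s * phi s)
    (fun x _ => hasDerivAt_neg_phi x)
    (by apply Continuous.intervalIntegrable; exact continuous_id.mul phi_cont)
  rw [this]; ring

lemma integral_Phi (a b : ℝ) :
    ∫ x in a..b, Phi x = (b * Phi b + phi b) - (a * Phi a + phi a) := by
  apply intervalIntegral.integral_eq_sub_of_hasDerivAt
    (f := fun s => s * Phi s + phi s)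
  · intro x _
    have h1 : HasDerivAt (fun s : ℝ => s * Phi s) (1 * Phi x + x * phi x) x :=
      (hasDerivAt_id x).mul (hasDerivAt_Phi x)
    have h2 := (hasDerivAt_neg_phi x).neg
    simp only [Pi.neg_def, neg_neg] at h2
    have := h1.add h2
    exact this.congr_deriv (by ring)
  · exact Phi_cont.intervalIntegrable _ _

/-- Inner double integral rewritten with interval integrals and `Phi`. -/
noncomputable def gfun (b₁ d₁ b₂ d₂ s a1 : ℝ) : ℝ :=
  ∫ z in b₁..(min d₁ (s * (1 - a1))), phi z *
    ∫ y in (0:ℝ)..(min (z + d₂) (z + s * a1)),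
      max (Phi (min d₂ (y - z + s * (1 - a1))) - Phi (max b₂ (y - z))) 0

lemma gfun_cont (b₁ d₁ b₂ d₂ s : ℝ) : Continuous (gfun b₁ d₁ b₂ d₂ s) := by
  apply intervalIntegral.continuous_parametric_intervalIntegral_of_continuous
    (f := fun a1 z => phi z *
      ∫ y in (0:ℝ)..(min (z + d₂) (z + s * a1)),
        max (Phi (min d₂ (y - z + s * (1 - a1))) - Phi (max b₂ (y - z))) 0)
  · apply Continuous.mul
    · exact phi_cont.comp continuous_snd
    · apply intervalIntegral.continuous_parametric_intervalIntegral_of_continuous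
        (f := fun (p : ℝ × ℝ) y =>
          max (Phi (min d₂ (y - p.2 + s * (1 - p.1))) - Phi (max b₂ (y - p.2))) 0)
      · apply Continuous.max _ continuous_const
        apply Continuous.sub
        · exact Phi_cont.comp (continuous_const.min (by fun_prop))
        · exact Phi_cont.comp (continuous_const.max (by fun_prop))
      · fun_prop
  · fun_prop

lemma sqrt_tendsto_atTop : Tendsto Real.sqrt atTop atTop := by
  apply tendsto_atTop_atTop.mpr
  intro b
  refine ⟨max 0 b ^ 2, fun a ha => le_trans (le_max_right 0 b) ?_⟩
  rw [← Real.sqrt_sq (le_max_left 0 b)]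
  exact Real.sqrt_le_sqrt ha

/-- asymptotics of the triple integral `H(λ)`. -/
theorem triple_integral_limit_H (b₁ d₁ b₂ d₂ : ℝ)
    (hb₁ : 0 ≤ b₁) (h₁ : b₁ < d₁) (h₁₂ : d₁ ≤ b₂) (h₂ : b₂ < d₂) :
    Tendsto (fun lam : ℝ =>
        oint 0 (1 - b₁ / Real.sqrt lam) (fun a1 =>
          oint b₁ (min d₁ (Real.sqrt lam * (1 - a1))) (fun z => phi z *
            oint 0 (min (z + d₂) (z + Real.sqrt lam * a1)) (fun y =>
              oint (max b₂ (y - z)) (min d₂ (y - z + Real.sqrt lam * (1 - a1))) phi))))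
      atTop
      (nhds ((∫ x in b₁..d₁, phi x) * (phi b₂ - phi d₂)
        + (∫ x in b₂..d₂, phi x) * (phi b₁ - phi d₁))) := by
  have hd₁0 : 0 < d₁ := lt_of_le_of_lt hb₁ h₁
  have hb₂0 : 0 < b₂ := lt_of_lt_of_le hd₁0 h₁₂
  have hd₂0 : 0 < b₂ := hb₂0
  have hd₂ : 0 < d₂ := lt_trans hb₂0 h₂
  set m1 : ℝ := ∫ x in b₁..d₁, phi x with hm1
  set m2 : ℝ := ∫ x in b₂..d₂, phi x with hm2def
  set L : ℝ := m1 * (phi b₂ - phi d₂) + m2 * (phi b₁ - phi d₁) with hL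
  set s₀ : ℝ := b₁ + d₁ + 2 * d₂ + 1 with hs₀def
  have hs₀pos : 1 ≤ s₀ := by simp only [hs₀def]; linarith
  have hm2eq : m2 = Phi d₂ - Phi b₂ := by rw [hm2def, integral_phi_eq]
  have hM2 : 0 ≤ Phi d₂ - Phi b₂ := sub_nonneg.2 (Phi_mono h₂.le)
  set M : ℝ := (Phi d₂ - Phi b₂) * (d₁ + d₂) * (d₁ - b₁) with hMdef
  -- Step A: equality of `oint` expression with `gfun` for a1 in the relevant range
  have heq : ∀ s : ℝ, s₀ ≤ s → ∀ a1 ∈ Set.Ioc (0:ℝ) (1 - b₁ / s),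
      oint b₁ (min d₁ (s * (1 - a1))) (fun z => phi z *
        oint 0 (min (z + d₂) (z + s * a1)) (fun y =>
          oint (max b₂ (y - z)) (min d₂ (y - z + s * (1 - a1))) phi))
      = gfun b₁ d₁ b₂ d₂ s a1 := by
    intro s hs a1 ha
    obtain ⟨ha0, hae⟩ := ha
    have hs0 : 0 < s := lt_of_lt_of_le (by linarith) hs
    have hb₁s : b₁ ≤ s * (1 - a1) := by
      have : b₁ / s ≤ 1 - a1 := by linarith
      calc b₁ = s * (b₁ / s) := by field_simp
      _ ≤ s * (1 - a1) := by exact mul_le_mul_of_nonneg_left this hs0.le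
    have hv : b₁ ≤ min d₁ (s * (1 - a1)) := le_min h₁.le hb₁s
    rw [oint_eq hv, gfun]
    apply intervalIntegral.integral_congr
    intro z hz
    rw [Set.uIcc_of_le hv] at hz
    have hz0 : 0 ≤ z := le_trans hb₁ hz.1
    have hu : (0:ℝ) ≤ min (z + d₂) (z + s * a1) :=
      le_min (by linarith) (by nlinarith [mul_nonneg hs0.le ha0.le])
    show phi z * _ = phi z * _
    rw [oint_eq hu]
    congr 1
    apply intervalIntegral.integral_congr
    intro y _
    exact oint_phi _ _
  -- Step B: value of gfun on the middle interval
  have hmid : ∀ s : ℝ, s₀ ≤ s → ∀ a1 ∈ Set.Icc (d₂ / s) (1 - (d₁ + d₂) / s),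
      gfun b₁ d₁ b₂ d₂ s a1 = L := by
    intro s hs a1 ha
    obtain ⟨ha1, ha2⟩ := ha
    have hs0 : 0 < s := lt_of_lt_of_le (by linarith) hs
    have hsa : d₂ ≤ s * a1 := by
      calc d₂ = s * (d₂ / s) := by field_simp
      _ ≤ s * a1 := mul_le_mul_of_nonneg_left ha1 hs0.le
    have hsb : d₁ + d₂ ≤ s * (1 - a1) := by
      have h' : (d₁ + d₂) / s ≤ 1 - a1 := by linarith
      calc d₁ + d₂ = s * ((d₁ + d₂) / s) := by field_simp
      _ ≤ s * (1 - a1) := mul_le_mul_of_nonneg_left h' hs0.le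
    rw [gfun, min_eq_left (by linarith : d₁ ≤ s * (1 - a1))]
    have hzcong : Set.EqOn
        (fun z => phi z * ∫ y in (0:ℝ)..(min (z + d₂) (z + s * a1)),
          max (Phi (min d₂ (y - z + s * (1 - a1))) - Phi (max b₂ (y - z))) 0)
        (fun z => (Phi d₂ - Phi b₂) * (z * phi z) + (phi b₂ - phi d₂) * phi z)
        (Set.uIcc b₁ d₁) := by
      intro z hz
      rw [Set.uIcc_of_le h₁.le] at hz
      have hz0 : 0 ≤ z := le_trans hb₁ hz.1
      have hzd : z ≤ d₁ := hz.2
      have hmin : min (z + d₂) (z + s * a1) = z + d₂ := min_eq_left (by linarith)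
      show phi z * _ = _
      rw [hmin]
      have hycong : Set.EqOn
          (fun y => max (Phi (min d₂ (y - z + s * (1 - a1))) - Phi (max b₂ (y - z))) 0)
          (fun y => (fun t => Phi d₂ - Phi (max b₂ t)) (y - z))
          (Set.uIcc (0:ℝ) (z + d₂)) := by
        intro y hy
        rw [Set.uIcc_of_le (by linarith : (0:ℝ) ≤ z + d₂)] at hy
        have hy0 : 0 ≤ y := hy.1
        have hyz : y ≤ z + d₂ := hy.2
        have hmin2 : min d₂ (y - z + s * (1 - a1)) = d₂ := min_eq_left (by linarith)
        show max _ 0 = _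
        rw [hmin2, max_eq_left]
        exact sub_nonneg.2 (Phi_mono (max_le h₂.le (by linarith)))
      rw [intervalIntegral.integral_congr hycong,
        intervalIntegral.integral_comp_sub_right (fun t => Phi d₂ - Phi (max b₂ t)) z]
      have hF : Continuous fun t => Phi d₂ - Phi (max b₂ t) := by
        exact continuous_const.sub (Phi_cont.comp (continuous_const.max continuous_id))
      rw [show (0:ℝ) - z = -z by ring, show z + d₂ - z = d₂ by ring]
      rw [← intervalIntegral.integral_add_adjacent_intervals (a := -z) (b := b₂) (c := d₂)
        (hF.intervalIntegrable _ _) (hF.intervalIntegrable _ _)]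
      have e1 : (∫ t in (-z)..b₂, Phi d₂ - Phi (max b₂ t)) = (b₂ + z) * (Phi d₂ - Phi b₂) := by
        rw [intervalIntegral.integral_congr (g := fun _ => Phi d₂ - Phi b₂)
          (fun t ht => by
            rw [Set.uIcc_of_le (by linarith : -z ≤ b₂)] at ht
            show Phi d₂ - Phi (max b₂ t) = _
            rw [max_eq_left ht.2]),
          intervalIntegral.integral_const]
        rw [smul_eq_mul]; ring
      have e2 : (∫ t in b₂..d₂, Phi d₂ - Phi (max b₂ t))
          = (d₂ - b₂) * Phi d₂ - ((d₂ * Phi d₂ + phi d₂) - (b₂ * Phi b₂ + phi b₂)) := by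
        rw [intervalIntegral.integral_congr (g := fun t => Phi d₂ - Phi t)
          (fun t ht => by
            rw [Set.uIcc_of_le h₂.le] at ht
            show Phi d₂ - Phi (max b₂ t) = _
            rw [max_eq_right ht.1]),
          intervalIntegral.integral_sub (intervalIntegrable_const) (Phi_cont.intervalIntegrable _ _),
          intervalIntegral.integral_const, integral_Phi, smul_eq_mul]
      rw [e1, e2]
      ring
    rw [intervalIntegral.integral_congr hzcong,
      intervalIntegral.integral_add
        (by exact (continuous_const.mul (continuous_id.mul phi_cont)).intervalIntegrable _ _)
        (by exact (continuous_const.mul phi_cont).intervalIntegrable _ _),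
      intervalIntegral.integral_const_mul, intervalIntegral.integral_const_mul,
      integral_id_mul_phi, ← hm1, hL, hm2eq]
    ring
  -- Step C: uniform bound on gfun
  have hbound : ∀ s : ℝ, s₀ ≤ s → ∀ a1 ∈ Set.Icc (0:ℝ) (1 - b₁ / s),
      ‖gfun b₁ d₁ b₂ d₂ s a1‖ ≤ M := by
    intro s hs a1 ha
    obtain ⟨ha0, hae⟩ := ha
    have hs0 : 0 < s := lt_of_lt_of_le (by linarith) hs
    have hb₁s : b₁ ≤ s * (1 - a1) := by
      have : b₁ / s ≤ 1 - a1 := by linarith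
      calc b₁ = s * (b₁ / s) := by field_simp
      _ ≤ s * (1 - a1) := mul_le_mul_of_nonneg_left this hs0.le
    have hv : b₁ ≤ min d₁ (s * (1 - a1)) := le_min h₁.le hb₁s
    rw [gfun]
    have hin : ∀ z ∈ Set.uIoc b₁ (min d₁ (s * (1 - a1))),
        ‖phi z * ∫ y in (0:ℝ)..(min (z + d₂) (z + s * a1)),
          max (Phi (min d₂ (y - z + s * (1 - a1))) - Phi (max b₂ (y - z))) 0‖
        ≤ (Phi d₂ - Phi b₂) * (d₁ + d₂) := by
      intro z hz
      rw [Set.uIoc_of_le hv] at hz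
      have hz0 : 0 ≤ z := le_trans hb₁ hz.1.le
      have hzd : z ≤ d₁ := le_trans hz.2 (min_le_left _ _)
      rw [norm_mul]
      have h1 : ‖phi z‖ ≤ 1 := by
        rw [Real.norm_eq_abs, abs_of_pos (phi_pos z)]; exact phi_le_one z
      have h2 : ‖∫ y in (0:ℝ)..(min (z + d₂) (z + s * a1)),
          max (Phi (min d₂ (y - z + s * (1 - a1))) - Phi (max b₂ (y - z))) 0‖
          ≤ (Phi d₂ - Phi b₂) * (d₁ + d₂) := by
        have hu0 : (0:ℝ) ≤ min (z + d₂) (z + s * a1) :=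
          le_min (by linarith) (by nlinarith [mul_nonneg hs0.le ha0])
        have hud : min (z + d₂) (z + s * a1) ≤ d₁ + d₂ :=
          le_trans (min_le_left _ _) (by linarith)
        calc ‖∫ y in (0:ℝ)..(min (z + d₂) (z + s * a1)),
            max (Phi (min d₂ (y - z + s * (1 - a1))) - Phi (max b₂ (y - z))) 0‖
            ≤ (Phi d₂ - Phi b₂) * |min (z + d₂) (z + s * a1) - 0| := by
              apply intervalIntegral.norm_integral_le_of_norm_le_const
              intro y _
              rw [Real.norm_eq_abs, abs_of_nonneg (le_max_right _ _)]
              apply max_le _ hM2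
              exact sub_le_sub (Phi_mono (min_le_left _ _)) (Phi_mono (le_max_left _ _))
        _ ≤ (Phi d₂ - Phi b₂) * (d₁ + d₂) := by
              apply mul_le_mul_of_nonneg_left _ hM2
              rw [sub_zero, abs_of_nonneg hu0]
              exact hud
      calc ‖phi z‖ * ‖_‖ ≤ 1 * ((Phi d₂ - Phi b₂) * (d₁ + d₂)) :=
        mul_le_mul h1 h2 (norm_nonneg _) zero_le_one
      _ = (Phi d₂ - Phi b₂) * (d₁ + d₂) := one_mul _
    calc ‖∫ z in b₁..(min d₁ (s * (1 - a1))), phi z *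
          ∫ y in (0:ℝ)..(min (z + d₂) (z + s * a1)),
            max (Phi (min d₂ (y - z + s * (1 - a1))) - Phi (max b₂ (y - z))) 0‖
        ≤ ((Phi d₂ - Phi b₂) * (d₁ + d₂)) * |min d₁ (s * (1 - a1)) - b₁| :=
          intervalIntegral.norm_integral_le_of_norm_le_const hin
    _ ≤ M := by
          rw [hMdef, mul_assoc ((Phi d₂ - Phi b₂)) (d₁ + d₂) (d₁ - b₁), ← mul_assoc]
          apply mul_le_mul_of_nonneg_left _ (mul_nonneg hM2 (by linarith))
          rw [abs_of_nonneg (by linarith)]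
          have : min d₁ (s * (1 - a1)) ≤ d₁ := min_le_left _ _
          linarith
  -- Step D: eventual decomposition
  have hkey : ∀ lam : ℝ, s₀ ^ 2 ≤ lam →
      oint 0 (1 - b₁ / Real.sqrt lam) (fun a1 =>
        oint b₁ (min d₁ (Real.sqrt lam * (1 - a1))) (fun z => phi z *
          oint 0 (min (z + d₂) (z + Real.sqrt lam * a1)) (fun y =>
            oint (max b₂ (y - z)) (min d₂ (y - z + Real.sqrt lam * (1 - a1))) phi)))
      = (∫ a1 in (0:ℝ)..(d₂ / Real.sqrt lam), gfun b₁ d₁ b₂ d₂ (Real.sqrt lam) a1)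
        + L * ((1 - (d₁ + d₂) / Real.sqrt lam) - d₂ / Real.sqrt lam)
        + (∫ a1 in (1 - (d₁ + d₂) / Real.sqrt lam)..(1 - b₁ / Real.sqrt lam),
            gfun b₁ d₁ b₂ d₂ (Real.sqrt lam) a1) := by
    intro lam hlam
    set s : ℝ := Real.sqrt lam with hsdef
    have hs : s₀ ≤ s := by
      rw [hsdef, show s₀ = Real.sqrt (s₀ ^ 2) by
        rw [Real.sqrt_sq (by linarith)]]
      exact Real.sqrt_le_sqrt hlam
    have hs0 : 0 < s := lt_of_lt_of_le (by linarith) hs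
    have hcm : d₂ / s ≤ 1 - (d₁ + d₂) / s := by
      have h' : (d₂ + (d₁ + d₂)) / s ≤ 1 := by
        rw [div_le_one hs0]; simp only [hs₀def] at hs; linarith
      rw [add_div] at h'
      linarith
    have hme : 1 - (d₁ + d₂) / s ≤ 1 - b₁ / s := by
      have h' : b₁ / s ≤ (d₁ + d₂) / s := (div_le_div_iff_of_pos_right hs0).2 (by linarith)
      linarith
    have hc0 : 0 ≤ d₂ / s := div_nonneg hd₂.le hs0.le
    have he1 : 1 - b₁ / s ≤ 1 := by
      have : 0 ≤ b₁ / s := div_nonneg hb₁ hs0.le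
      linarith
    have h0e : (0:ℝ) ≤ 1 - b₁ / s := by
      have : b₁ / s ≤ 1 := by
        rw [div_le_one hs0]
        simp only [hs₀def] at hs; linarith
      linarith
    have hoint : oint 0 (1 - b₁ / s) (fun a1 =>
        oint b₁ (min d₁ (s * (1 - a1))) (fun z => phi z *
          oint 0 (min (z + d₂) (z + s * a1)) (fun y =>
            oint (max b₂ (y - z)) (min d₂ (y - z + s * (1 - a1))) phi)))
        = ∫ a1 in (0:ℝ)..(1 - b₁ / s), gfun b₁ d₁ b₂ d₂ s a1 := by
      rw [oint, intervalIntegral.integral_of_le h0e]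
      apply MeasureTheory.setIntegral_congr_fun measurableSet_Ioc
      intro a1 ha1
      exact heq s hs a1 ha1
    rw [hoint]
    have hint : ∀ a b : ℝ, IntervalIntegrable (gfun b₁ d₁ b₂ d₂ s) volume a b :=
      fun a b => (gfun_cont b₁ d₁ b₂ d₂ s).intervalIntegrable a b
    rw [← intervalIntegral.integral_add_adjacent_intervals (a := (0:ℝ))
      (b := d₂ / s) (c := 1 - b₁ / s) (hint _ _) (hint _ _),
      ← intervalIntegral.integral_add_adjacent_intervals (a := d₂ / s)
      (b := 1 - (d₁ + d₂) / s) (c := 1 - b₁ / s) (hint _ _) (hint _ _)]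
    have hmidint : (∫ a1 in (d₂ / s)..(1 - (d₁ + d₂) / s), gfun b₁ d₁ b₂ d₂ s a1)
        = L * ((1 - (d₁ + d₂) / s) - d₂ / s) := by
      rw [intervalIntegral.integral_congr (g := fun _ => L)
        (fun a1 ha1 => by
          rw [Set.uIcc_of_le hcm] at ha1
          exact hmid s hs a1 ha1),
        intervalIntegral.integral_const, smul_eq_mul]
      ring
    rw [hmidint]
    ring

  have hsqrt : ∀ lam : ℝ, s₀ ^ 2 ≤ lam → s₀ ≤ Real.sqrt lam := by
    intro lam hlam
    rw [show s₀ = Real.sqrt (s₀ ^ 2) by rw [Real.sqrt_sq (by linarith)]]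
    exact Real.sqrt_le_sqrt hlam
  have hst : Tendsto (fun lam : ℝ => Real.sqrt lam) atTop atTop := sqrt_tendsto_atTop
  have hT1 : Tendsto (fun lam : ℝ => d₂ / Real.sqrt lam) atTop (nhds 0) :=
    tendsto_const_nhds.div_atTop hst
  have hT2 : Tendsto (fun lam : ℝ => (d₁ + d₂) / Real.sqrt lam) atTop (nhds 0) :=
    tendsto_const_nhds.div_atTop hst
  have hT3 : Tendsto (fun lam : ℝ => (d₁ + d₂ - b₁) / Real.sqrt lam) atTop (nhds 0) :=
    tendsto_const_nhds.div_atTop hst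
  have hEv : ∀ᶠ lam : ℝ in atTop, s₀ ^ 2 ≤ lam := eventually_ge_atTop _
  have hE1 : Tendsto (fun lam : ℝ => ∫ a1 in (0:ℝ)..(d₂ / Real.sqrt lam),
      gfun b₁ d₁ b₂ d₂ (Real.sqrt lam) a1) atTop (nhds 0) := by
    apply squeeze_zero_norm' ?_ (by simpa using hT1.const_mul M)
    filter_upwards [hEv] with lam hlam
    have hs : s₀ ≤ Real.sqrt lam := hsqrt lam hlam
    set s := Real.sqrt lam with hsdef
    have hs0 : 0 < s := lt_of_lt_of_le (by linarith) hs
    have hce : d₂ / s ≤ 1 - b₁ / s := by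
      have h' : (d₂ + b₁) / s ≤ 1 := by
        rw [div_le_one hs0]; simp only [hs₀def] at hs; linarith
      rw [add_div] at h'
      linarith
    calc ‖∫ a1 in (0:ℝ)..(d₂ / s), gfun b₁ d₁ b₂ d₂ s a1‖
        ≤ M * |d₂ / s - 0| := by
          apply intervalIntegral.norm_integral_le_of_norm_le_const
          intro a1 ha1
          rw [Set.uIoc_of_le (div_nonneg hd₂.le hs0.le)] at ha1
          exact hbound s hs a1 ⟨ha1.1.le, le_trans ha1.2 hce⟩
    _ = M * (d₂ / s) := by rw [sub_zero, abs_of_nonneg (div_nonneg hd₂.le hs0.le)]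
  have hE2 : Tendsto (fun lam : ℝ =>
      ∫ a1 in (1 - (d₁ + d₂) / Real.sqrt lam)..(1 - b₁ / Real.sqrt lam),
        gfun b₁ d₁ b₂ d₂ (Real.sqrt lam) a1) atTop (nhds 0) := by
    apply squeeze_zero_norm' ?_ (by simpa using hT3.const_mul M)
    filter_upwards [hEv] with lam hlam
    have hs : s₀ ≤ Real.sqrt lam := hsqrt lam hlam
    set s := Real.sqrt lam with hsdef
    have hs0 : 0 < s := lt_of_lt_of_le (by linarith) hs
    have hds : (d₁ + d₂) / s ≤ 1 := by
      rw [div_le_one hs0]; simp only [hs₀def] at hs; linarith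
    have hme : 1 - (d₁ + d₂) / s ≤ 1 - b₁ / s := by
      have h' : b₁ / s ≤ (d₁ + d₂) / s := (div_le_div_iff_of_pos_right hs0).2 (by linarith)
      linarith
    calc ‖∫ a1 in (1 - (d₁ + d₂) / s)..(1 - b₁ / s), gfun b₁ d₁ b₂ d₂ s a1‖
        ≤ M * |(1 - b₁ / s) - (1 - (d₁ + d₂) / s)| := by
          apply intervalIntegral.norm_integral_le_of_norm_le_const
          intro a1 ha1
          rw [Set.uIoc_of_le hme] at ha1
          refine hbound s hs a1 ⟨?_, ha1.2⟩
          linarith [ha1.1]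
    _ = M * ((d₁ + d₂ - b₁) / s) := by
          rw [show (1 - b₁ / s) - (1 - (d₁ + d₂) / s) = (d₁ + d₂ - b₁) / s by ring,
            abs_of_nonneg (div_nonneg (by linarith) hs0.le)]
  have hEm : Tendsto (fun lam : ℝ =>
      L * ((1 - (d₁ + d₂) / Real.sqrt lam) - d₂ / Real.sqrt lam)) atTop (nhds L) := by
    have h' := (((tendsto_const_nhds (x := (1:ℝ)) (f := atTop)).sub hT2).sub hT1).const_mul L
    simpa using h'
  have hsum := (hE1.add hEm).add hE2
  rw [zero_add, add_zero] at hsum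
  apply hsum.congr'
  filter_upwards [hEv] with lam hlam
  exact (hkey lam hlam).symm
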